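/- Let (π, U, H) be a representation of a C*-dynamical system (A, α) with π faithful. Then the ideal J = {a ∈ A : U*U π(a) = π(a)} satisfies J ∩ ker α = {0}, i.e. J is orthogonal to the kernel of α. -/
import Mathlib


/-- For a representation `(π, U, H)` of `(A, α)` with `π` faithful,
the ideal `J = {a : U*U π(a) = π(a)}` is orthogonal to `ker α`: `J ∩ ker α = {0}`. -/
theorem covariance_ideal_orthogonal_to_ker
    {A : Type*} [CStarAlgebra A]
    {H : Type*} [NormedAddCommGroup H] [InnerProductSpace ℂ H] [CompleteSpace H]
    (α : A →⋆ₐ[ℂ] A) (π : A →⋆ₐ[ℂ] (H →L[ℂ] H)) (U : H →L[ℂ] H)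
    (hfaithful : Function.Injective π)
    (hcov : ∀ a : A, U * π a * star U = π (α a)) :
    {a : A | star U * U * π a = π a} ∩ {a : A | α a = 0} = {0} := by
  ext a
  simp only [Set.mem_inter_iff, Set.mem_setOf_eq, Set.mem_singleton_iff]
  constructor
  · rintro ⟨hJ, hker⟩
    have h2 : (U * π a) * star (U * π a) = 0 := by
      have : (U * π a) * star (U * π a) = U * π (a * star a) * star U := by
        rw [star_mul, map_mul, map_star]
        noncomm_ring
      rw [this, hcov, map_mul, hker, map_star, hker, star_zero, zero_mul, map_zero]
    have h3 : U * π a = 0 := (CStarRing.mul_star_self_eq_zero_iff _).mp h2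
    have h4 : π a = 0 := by
      rw [← hJ, mul_assoc, h3, mul_zero]
    exact hfaithful (by rw [h4, map_zero])
  · rintro rfl
    simp
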